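/- Let B(λ) be a highest weight normal crystal with highest weight element b_λ. If b = f_{i_1}^{m_1} f_{i_2}^{m_2} ⋯ f_{i_k}^{m_k}(b_λ) with all m_j ≥ 0 and k minimal among all such expressions for b, then s_{i_1} s_{i_2} ⋯ s_{i_k} is a reduced expression in the Weyl group W. -/

import Mathlib

/-! Common definitions: abstract normal crystals, tensor products, extremal subsets,
hinges, Demazure crystals, and related Coxeter-theoretic notions. -/

/-- Iterate a partially defined map `k` times. -/
def optIter {B : Type*} (g : B → Option B) : ℕ → B → Option B
  | 0, b => some b
  | k + 1, b => (g b).bind (optIter g k)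

/-- The raw data of a crystal: index set `I` (Dynkin nodes), weight lattice `P` with
simple roots `alpha i` and coroot pairings `pair i = ⟨α_i^∨, ·⟩`, and the structure
maps `wt, ε_i, φ_i, e_i, f_i` (with `none` playing the role of `0`). -/
structure CrystalStruct (I : Type*) (P : Type*) [AddCommGroup P] (B : Type*) where
  alpha : I → P
  pair : I → P →+ ℤ
  wt : B → P
  eps : I → B → ℤ
  phi : I → B → ℤ
  e : I → B → Option B
  f : I → B → Option B

namespace CrystalStruct

variable {I P B B₁ B₂ : Type*} [AddCommGroup P]

/-- The crystal axioms (C1)–(C4) of a (finite, normal) crystal. Axiom (C4) is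
expressed by saying `ε_i(b)` (resp. `φ_i(b)`) is the largest `k` with `e_i^k(b)`
(resp. `f_i^k(b)`) defined. -/
structure IsCrystal (C : CrystalStruct I P B) : Prop where
  C1 : ∀ i b, C.phi i b - C.eps i b = C.pair i (C.wt b)
  wt_e : ∀ i b b', C.e i b = some b' → C.wt b' = C.wt b + C.alpha i
  wt_f : ∀ i b b', C.f i b = some b' → C.wt b' = C.wt b - C.alpha i
  C3 : ∀ i b b', C.e i b = some b' ↔ C.f i b' = some b
  eps_nonneg : ∀ i b, 0 ≤ C.eps i b
  phi_nonneg : ∀ i b, 0 ≤ C.phi i b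
  eps_max : ∀ i b, (optIter (C.e i) (C.eps i b).toNat b).isSome ∧
      ∀ k : ℕ, (optIter (C.e i) k b).isSome → (k : ℤ) ≤ C.eps i b
  phi_max : ∀ i b, (optIter (C.f i) (C.phi i b).toNat b).isSome ∧
      ∀ k : ℕ, (optIter (C.f i) k b).isSome → (k : ℤ) ≤ C.phi i b

/-- The tensor product `B₁ ⊗ B₂` of two crystals, with the standard signature rule. -/
def tensor (C₁ : CrystalStruct I P B₁) (C₂ : CrystalStruct I P B₂) :
    CrystalStruct I P (B₁ × B₂) where
  alpha := C₁.alpha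
  pair := C₁.pair
  wt b := C₁.wt b.1 + C₂.wt b.2
  eps i b := max (C₁.eps i b.1) (C₂.eps i b.2 - C₁.pair i (C₁.wt b.1))
  phi i b := max (C₂.phi i b.2) (C₁.phi i b.1 + C₁.pair i (C₂.wt b.2))
  e i b := if C₂.eps i b.2 ≤ C₁.phi i b.1
      then (C₁.e i b.1).map (fun x => (x, b.2))
      else (C₂.e i b.2).map (fun y => (b.1, y))
  f i b := if C₂.eps i b.2 < C₁.phi i b.1
      then (C₁.f i b.1).map (fun x => (x, b.2))
      else (C₂.f i b.2).map (fun y => (b.1, y))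

/-- A subset `X` of a crystal is *extremal* (string property): `X` is nonempty, closed
under all raising operators `e_i`, and whenever `x ∈ X` is not the top of its `i`-string
(i.e. `e_i x` is defined), `X` also contains `f_i x` when defined.  This is the local
reformulation of: every `i`-string meets `X` in `∅`, the whole string, or its top element. -/
def Extremal (C : CrystalStruct I P B) (X : Set B) : Prop :=
  X.Nonempty ∧ ∀ i, ∀ x ∈ X,
    (∀ x', C.e i x = some x' → x' ∈ X) ∧
    ((C.e i x).isSome → ∀ x', C.f i x = some x' → x' ∈ X)

/-- `x ⊗ y` is an *`i`-hinge*: `ε_i(x) > 0`, `φ_i(x) = 0`, `ε_i(y) = 0`, `φ_i(y) > 0`. -/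
def IsHinge (C₁ : CrystalStruct I P B₁) (C₂ : CrystalStruct I P B₂)
    (i : I) (x : B₁) (y : B₂) : Prop :=
  0 < C₁.eps i x ∧ C₁.phi i x = 0 ∧ C₂.eps i y = 0 ∧ 0 < C₂.phi i y

/-- `F_i X = ⋃_{k ≥ 0} f_i^k X` : close a subset under the lowering operator `f_i`. -/
def fClosure (C : CrystalStruct I P B) (i : I) (X : Set B) : Set B :=
  {b | ∃ x ∈ X, ∃ k, optIter (C.f i) k x = some b}

/-- `demWord C [i₁, …, i_k] X = F_{i₁} F_{i₂} ⋯ F_{i_k} X`. -/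
def demWord (C : CrystalStruct I P B) : List I → Set B → Set B
  | [], X => X
  | i :: L, X => C.fClosure i (C.demWord L X)

/-- Apply raising operators along a list of indices. -/
def applyE (C : CrystalStruct I P B) : List I → B → Option B
  | [], b => some b
  | i :: L, b => (C.e i b).bind (C.applyE L)

/-- `applyFPow C [(i₁,m₁),…,(i_k,m_k)] b = f_{i₁}^{m₁} f_{i₂}^{m₂} ⋯ f_{i_k}^{m_k} (b)`. -/
def applyFPow (C : CrystalStruct I P B) : List (I × ℕ) → B → Option B
  | [], b => some b
  | p :: L, b => (C.applyFPow L b).bind (optIter (C.f p.1) p.2)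

/-- A highest weight element: all raising operators vanish. -/
def HighestWeight (C : CrystalStruct I P B) (b : B) : Prop := ∀ i, C.e i b = none

/-- `C` is a highest weight normal crystal with highest weight element `hw`:
it satisfies the crystal axioms, `hw` is highest weight, and `B = F {hw}`. -/
structure IsHWCrystal (C : CrystalStruct I P B) (hw : B) : Prop where
  crystal : C.IsCrystal
  hw_top : C.HighestWeight hw
  connected : ∀ b, ∃ L : List I, b ∈ C.demWord L {hw}

/-- The connected component `F {b}` of `b` (closure under lowering operators). -/
def component (C : CrystalStruct I P B) (b : B) : Set B :=
  {x | ∃ L : List I, x ∈ C.demWord L {b}}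

end CrystalStruct

section Coxeter

open CrystalStruct

variable {I : Type*} {W : Type*} [Group W] {M : CoxeterMatrix I}

/-- Bruhat order via the subword property: `u ⪯ w` iff some reduced word for `w` contains
a reduced word for `u` as a subword. -/
def Bruhat (cs : CoxeterSystem M W) (u w : W) : Prop :=
  ∃ L L' : List I, cs.IsReduced L ∧ cs.wordProd L = w ∧
    L'.Sublist L ∧ cs.IsReduced L' ∧ cs.wordProd L' = u

variable {P B : Type*} [AddCommGroup P]

/-- The Demazure crystal `B_w = F_w {hw}`, as the union over reduced words for `w`
of the corresponding compositions of string closures. -/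
def DemCrystal (cs : CoxeterSystem M W) (C : CrystalStruct I P B) (hw : B) (w : W) :
    Set B :=
  {b | ∃ L : List I, cs.IsReduced L ∧ cs.wordProd L = w ∧ b ∈ C.demWord L {hw}}

/-- Kashiwara's theorem: `F_w {hw}` is independent of the reduced word for `w`. -/
def DemIndep (cs : CoxeterSystem M W) (C : CrystalStruct I P B) (hw : B) : Prop :=
  ∀ L L' : List I, cs.IsReduced L → cs.IsReduced L' → cs.wordProd L = cs.wordProd L' →
    C.demWord L {hw} = C.demWord L' {hw}

/-- A subset is a *direct sum of Demazure crystals* if it is the union, over a set of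
highest weight elements, of Demazure crystals of the corresponding components. -/
def IsDemazureSum (cs : CoxeterSystem M W) (C : CrystalStruct I P B) (Z : Set B) : Prop :=
  ∃ (S : Set B) (wf : B → W), (∀ b ∈ S, C.HighestWeight b) ∧
    Z = ⋃ b ∈ S, DemCrystal cs C b (wf b)

/-- `v` is the minimal-length representative of the coset `w H`. -/
def IsMinCosetRep (cs : CoxeterSystem M W) (H : Subgroup W) (w v : W) : Prop :=
  w⁻¹ * v ∈ H ∧ ∀ x : W, w⁻¹ * x ∈ H → cs.length v ≤ cs.length x

/-- `v` is the maximal-length representative of the coset `w H`. -/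
def IsMaxCosetRep (cs : CoxeterSystem M W) (H : Subgroup W) (w v : W) : Prop :=
  w⁻¹ * v ∈ H ∧ ∀ x : W, w⁻¹ * x ∈ H → cs.length x ≤ cs.length v

/-- The parabolic subgroup `W_σ = ⟨ s_i : s_i σ ≺ σ ⟩` generated by the left descents of `σ`. -/
def descentSubgroup (cs : CoxeterSystem M W) (σ : W) : Subgroup W :=
  Subgroup.closure {g | ∃ i, g = cs.simple i ∧ cs.length (cs.simple i * σ) < cs.length σ}

/-- The Weyl group acts on the weight lattice by simple reflections:
`s_i • p = p − ⟨α_i^∨, p⟩ α_i`. -/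
def ReflectionAction (cs : CoxeterSystem M W) (C : CrystalStruct I P B)
    [MulAction W P] : Prop :=
  ∀ (i : I) (p : P), cs.simple i • p = p - C.pair i p • C.alpha i

end Coxeter

namespace CrystalStruct

variable {I P B : Type*} [AddCommGroup P]

/-- Weight of a pure tensor `b₁ ⊗ ⋯ ⊗ b_m`, encoded as a list. -/
def listWt (C : CrystalStruct I P B) : List B → P
  | [] => 0
  | b :: l => C.wt b + C.listWt l

/-- `ε_i` on iterated tensors. -/
def listEps (C : CrystalStruct I P B) (i : I) : List B → ℤ
  | [] => 0
  | b :: l => max (C.eps i b) (C.listEps i l - C.pair i (C.wt b))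

/-- `φ_i` on iterated tensors. -/
def listPhi (C : CrystalStruct I P B) (i : I) : List B → ℤ
  | [] => 0
  | b :: l => max (C.listPhi i l) (C.phi i b + C.pair i (C.listWt l))

/-- `e_i` on iterated tensors (standard signature rule, iterated associatively). -/
def listE (C : CrystalStruct I P B) (i : I) : List B → Option (List B)
  | [] => none
  | b :: l => if C.listEps i l ≤ C.phi i b then (C.e i b).map (· :: l)
      else (C.listE i l).map (b :: ·)

/-- `f_i` on iterated tensors. -/
def listF (C : CrystalStruct I P B) (i : I) : List B → Option (List B)
  | [] => none
  | b :: l => if C.listEps i l < C.phi i b then (C.f i b).map (· :: l)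
      else (C.listF i l).map (b :: ·)

/-- The iterated tensor power crystal: pure tensors of all finite lengths, the
length-`m` ones forming `B^{⊗ m}`. -/
def tensorPow (C : CrystalStruct I P B) : CrystalStruct I P (List B) where
  alpha := C.alpha
  pair := C.pair
  wt := C.listWt
  eps := C.listEps
  phi := C.listPhi
  e := C.listE
  f := C.listF

end CrystalStruct

private lemma optIter_add' {B : Type*} (g : B → Option B) (k m : ℕ) (x : B) :
    optIter g (k + m) x = (optIter g k x).bind (optIter g m) := by
  induction k generalizing x with
  | zero => simp [optIter]
  | succ n ih => simp [optIter, Nat.succ_add, ih, Option.bind_assoc]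

private lemma mem_demWord_iff' {I P B : Type*} [AddCommGroup P] (C : CrystalStruct I P B)
    (hw : B) (L : List I) (b : B) :
    b ∈ C.demWord L {hw} ↔
      ∃ ps : List (I × ℕ), ps.map Prod.fst = L ∧ C.applyFPow ps hw = some b := by
  induction L generalizing b with
  | nil =>
    constructor
    · intro hb
      exact ⟨[], rfl, by simpa [CrystalStruct.applyFPow] using hb.symm⟩
    · rintro ⟨ps, hps, hfb⟩
      rw [List.map_eq_nil_iff] at hps
      subst hps
      simp only [CrystalStruct.applyFPow, Option.some_inj] at hfb
      simpa [CrystalStruct.demWord] using hfb.symm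
  | cons i L ih =>
    constructor
    · rintro ⟨x, hx, k, hk⟩
      obtain ⟨ps', hps', hfx⟩ := (ih x).mp hx
      exact ⟨(i, k) :: ps', by simp [hps'], by simp [CrystalStruct.applyFPow, hfx, hk]⟩
    · rintro ⟨ps, hps, hfb⟩
      cases ps with
      | nil => simp at hps
      | cons p ps' =>
        simp only [List.map_cons, List.cons.injEq] at hps
        obtain ⟨hp1, hps'⟩ := hps
        simp only [CrystalStruct.applyFPow, Option.bind_eq_some_iff] at hfb
        obtain ⟨x, hfx, hk⟩ := hfb
        exact ⟨x, (ih x).mpr ⟨ps', hps', hfx⟩, p.2, hp1 ▸ hk⟩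

open CrystalStruct in
/-- Proposition: subword: if `b = f_{i₁}^{m₁} ⋯ f_{i_k}^{m_k}(b_λ)` with
`k` minimal among all such expressions, then `s_{i₁} ⋯ s_{i_k}` is reduced. -/
theorem stmt10 {I P B : Type*} [AddCommGroup P] {W : Type*} [Group W]
    {M : CoxeterMatrix I} (cs : CoxeterSystem M W)
    (C : CrystalStruct I P B) (hw : B) (hC : C.IsHWCrystal hw)
    (hind : DemIndep cs C hw)
    (b : B) (ps : List (I × ℕ)) (hb : C.applyFPow ps hw = some b)
    (hmin : ∀ ps' : List (I × ℕ), C.applyFPow ps' hw = some b →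
      ps.length ≤ ps'.length) :
    cs.IsReduced (ps.map Prod.fst) := by
  induction ps generalizing b with
  | nil => simp [CoxeterSystem.IsReduced]
  | cons p ps ih =>
    obtain ⟨i, m⟩ := p
    simp only [CrystalStruct.applyFPow, Option.bind_eq_some_iff] at hb
    obtain ⟨b', hb', hfb⟩ := hb
    have hmin' : ∀ ps' : List (I × ℕ), C.applyFPow ps' hw = some b' →
        ps.length ≤ ps'.length := by
      intro ps' h
      have := hmin ((i, m) :: ps') (by simp [CrystalStruct.applyFPow, h, hfb])
      simpa using this
    have hred : cs.IsReduced (ps.map Prod.fst) := ih b' hb' hmin'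
    set L' := ps.map Prod.fst with hL'
    by_cases hcase :
        cs.length (cs.simple i * cs.wordProd L') = cs.length (cs.wordProd L') + 1
    · show cs.length (cs.wordProd (i :: L')) = (i :: L').length
      rw [cs.wordProd_cons, hcase, hred]
      simp
    · exfalso
      have hlt : cs.length (cs.simple i * cs.wordProd L') + 1 = cs.length (cs.wordProd L') :=
        (cs.length_simple_mul (cs.wordProd L') i).resolve_left hcase
      obtain ⟨T, hT, hTw⟩ := cs.exists_reduced_word' (cs.simple i * cs.wordProd L')
      have hprod : cs.wordProd (i :: T) = cs.wordProd L' := by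
        rw [cs.wordProd_cons, ← hTw, ← mul_assoc, cs.simple_mul_simple_self, one_mul]
      have hiT : cs.IsReduced (i :: T) := by
        show cs.length (cs.wordProd (i :: T)) = (i :: T).length
        rw [hprod]
        have hTlen : cs.length (cs.wordProd T) = T.length := hT
        rw [← hTw] at hTlen
        simp only [List.length_cons]
        omega
      have hb'mem : b' ∈ C.demWord (i :: T) {hw} := by
        rw [← hind L' (i :: T) hred hiT hprod.symm]
        exact (mem_demWord_iff' C hw L' b').mpr ⟨ps, rfl, hb'⟩
      obtain ⟨c, hc, k, hk⟩ := hb'mem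
      obtain ⟨psc, hpsc, hfc⟩ := (mem_demWord_iff' C hw T c).mp hc
      have hqs : C.applyFPow ((i, k + m) :: psc) hw = some b := by
        simp only [CrystalStruct.applyFPow, hfc, Option.bind_some]
        rw [optIter_add', hk, Option.bind_some, hfb]
      have hlen := hmin ((i, k + m) :: psc) hqs
      have h1 : psc.length = T.length := by rw [← hpsc, List.length_map]
      have h2 : cs.length (cs.wordProd T) = T.length := hT
      rw [← hTw] at h2
      have h3 : L'.length = ps.length := by rw [hL', List.length_map]
      have h4 : cs.length (cs.wordProd L') = L'.length := hred
      simp only [List.length_cons] at hlen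
      omega
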